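/- Let F be an m×η Ferrers diagram and let C be an [F, ϱ, δ] Ferrers diagram rank-metric code over F_q. For each i with 0 ≤ i ≤ δ−1, let ν_i be the number of dots of F that are not contained in the first i rows and not contained in the rightmost δ−1−i columns. Then ϱ ≤ min_{0 ≤ i ≤ δ−1} ν_i. -/

import Mathlib

open Matrix


/-- `M` is in reduced row echelon form with pivot (leading-one) column of row `i`
given by `piv i`: pivots strictly move right, each leading coefficient is `1`,
it is the first nonzero entry of its row, and it is the only nonzero entry of
its column. -/
def IsRREFWithPivots {F : Type*} [Field F] {k n : ℕ}
    (M : Matrix (Fin k) (Fin n) F) (piv : Fin k → Fin n) : Prop :=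
  StrictMono piv ∧
  (∀ i, M i (piv i) = 1) ∧
  (∀ (i : Fin k) (j : Fin n), j < piv i → M i j = 0) ∧
  (∀ i i' : Fin k, i' ≠ i → M i' (piv i) = 0)

/-- `M` is in reduced row echelon form. -/
def IsRREF {F : Type*} [Field F] {k n : ℕ} (M : Matrix (Fin k) (Fin n) F) : Prop :=
  ∃ piv, IsRREFWithPivots M piv

/-- The identifying (binary) vector associated with pivot columns `piv`:
its ones are exactly in the pivot positions. -/
def idVec {k n : ℕ} (piv : Fin k → Fin n) : Fin n → Bool :=
  fun j => decide (∃ i, piv i = j)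

/-- The subspace distance `d_S(X,Y) = dim X + dim Y - 2 dim (X ⊓ Y)`. -/
noncomputable def subDist {F : Type*} [Field F] {n : ℕ} (X Y : Submodule F (Fin n → F)) : ℕ :=
  Module.finrank F X + Module.finrank F Y - 2 * Module.finrank F ↥(X ⊓ Y)

lemma col_support_rank {F : Type*} [Field F] {m n : ℕ}
    (A : Matrix (Fin m) (Fin n) F) (s : Finset (Fin n))
    (h : ∀ c ∉ s, ∀ r, A r c = 0) : A.rank ≤ s.card := by
  classical
  let g : (↥s → F) →ₗ[F] (Fin m → F) :=
    { toFun := fun y r => ∑ c ∈ s.attach, y c * A r c.1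
      map_add' := by
        intro y z; funext r
        simp [add_mul, Finset.sum_add_distrib]
      map_smul' := by
        intro a y; funext r
        simp [Finset.mul_sum, mul_assoc] }
  have hrange : LinearMap.range A.mulVecLin ≤ LinearMap.range g := by
    rintro _ ⟨x, rfl⟩
    refine ⟨fun c => x c.1, ?_⟩
    funext r
    show ∑ c ∈ s.attach, x c.1 * A r c.1 = A.mulVecLin x r
    rw [Matrix.mulVecLin_apply]
    have h1 : ∑ c ∈ s.attach, x c.1 * A r c.1 = ∑ c ∈ s, x c * A r c :=
      Finset.sum_attach s (fun c => x c * A r c)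
    rw [h1]
    rw [Finset.sum_subset (Finset.subset_univ s) (fun c _ hc => by rw [h c hc r, mul_zero])]
    simp [Matrix.mulVec, dotProduct, mul_comm]
  calc A.rank = Module.finrank F ↥(LinearMap.range A.mulVecLin) := by rw [Matrix.rank]
    _ ≤ Module.finrank F ↥(LinearMap.range g) := Submodule.finrank_mono hrange
    _ ≤ Module.finrank F (↥s → F) := LinearMap.finrank_range_le g
    _ = s.card := by rw [Module.finrank_fintype_fun_eq_card, Fintype.card_coe]

lemma row_support_rank {F : Type*} [Field F] {m n : ℕ}
    (A : Matrix (Fin m) (Fin n) F) (s : Finset (Fin m))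
    (h : ∀ r ∉ s, ∀ c, A r c = 0) : A.rank ≤ s.card := by
  rw [← Matrix.rank_transpose]
  exact col_support_rank Aᵀ s (fun r hr c => h r hr c)

lemma matrix_rank_add_le {F : Type*} [Field F] {m n : ℕ}
    (A B : Matrix (Fin m) (Fin n) F) : (A + B).rank ≤ A.rank + B.rank := by
  rw [Matrix.rank, Matrix.rank, Matrix.rank, Matrix.mulVecLin_add]
  have hle : LinearMap.range (A.mulVecLin + B.mulVecLin) ≤
      LinearMap.range A.mulVecLin ⊔ LinearMap.range B.mulVecLin := by
    rintro _ ⟨x, rfl⟩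
    exact Submodule.mem_sup.mpr ⟨A.mulVecLin x, ⟨x, rfl⟩, B.mulVecLin x, ⟨x, rfl⟩, rfl⟩
  exact le_trans (Submodule.finrank_mono hle)
    (Submodule.finrank_add_le_finrank_add_finrank _ _)

/-- **Theorem 2 of the paper.** Let `Fd` be an `m × η` Ferrers
diagram (a set of dots which is right-justified in each row, with row sizes
weakly decreasing from top to bottom, whose rightmost column has `m` dots and
whose top row has `η` dots; rows are indexed from the top by `Fin m` and
columns from the left by `Fin η`). If `C` is an `[Fd, ϱ, δ]` Ferrers diagram
rank-metric code, then for every `i` with `0 ≤ i ≤ δ - 1`, `ϱ ≤ ν_i`, where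
`ν_i` is the number of dots of `Fd` not contained in the first `i` rows nor in
the rightmost `δ - 1 - i` columns; i.e. `ϱ ≤ min_{0 ≤ i ≤ δ-1} ν_i`. -/
theorem ferrers_rank_metric_bound {F : Type*} [Field F] [Fintype F] {m η : ℕ}
    (hm : 0 < m) (hη : 0 < η)
    (Fd : Finset (Fin m × Fin η))
    (hright : ∀ (i : Fin m) (j j' : Fin η), (i, j) ∈ Fd → j ≤ j' → (i, j') ∈ Fd)
    (hup : ∀ (i i' : Fin m) (j : Fin η), (i, j) ∈ Fd → i' ≤ i → (i', j) ∈ Fd)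
    (hlastcol : ∀ i : Fin m, (i, (⟨η - 1, by omega⟩ : Fin η)) ∈ Fd)
    (htoprow : ∀ j : Fin η, ((⟨0, hm⟩ : Fin m), j) ∈ Fd)
    (C : Submodule F (Matrix (Fin m) (Fin η) F)) (ϱ δ : ℕ)
    (hsupp : ∀ A ∈ C, ∀ p : Fin m × Fin η, p ∉ Fd → A p.1 p.2 = 0)
    (hdim : Module.finrank F C = ϱ)
    (hdist : ∀ A ∈ C, ∀ B ∈ C, A ≠ B → δ ≤ (A - B).rank) :
    ∀ i : ℕ, i ≤ δ - 1 →
      ϱ ≤ (Fd.filter fun p : Fin m × Fin η =>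
            i ≤ (p.1 : ℕ) ∧ (p.2 : ℕ) < η - (δ - 1 - i)).card := by
  intro i hi
  set k := δ - 1 - i with hk
  set t := η - k with ht
  set S : Finset (Fin m × Fin η) :=
    Fd.filter (fun p : Fin m × Fin η => i ≤ (p.1 : ℕ) ∧ (p.2 : ℕ) < t) with hS
  -- the restriction linear map
  let f : ↥C →ₗ[F] (↥S → F) :=
    { toFun := fun A p => (A : Matrix (Fin m) (Fin η) F) p.1.1 p.1.2
      map_add' := fun a b => rfl
      map_smul' := fun c a => rfl }
  have hinj : Function.Injective f := by
    rw [← LinearMap.ker_eq_bot, eq_bot_iff]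
    intro x hx
    have hx0 : ∀ p : ↥S, (x : Matrix (Fin m) (Fin η) F) p.1.1 p.1.2 = 0 := by
      intro p
      have := LinearMap.mem_ker.mp hx
      exact congrFun this p
    -- claim : the matrix x is zero
    have hxz : (x : Matrix (Fin m) (Fin η) F) = 0 := by
      by_contra hne
      set A : Matrix (Fin m) (Fin η) F := (x : Matrix (Fin m) (Fin η) F) with hA
      -- split A into rows < i part and the rest
      let A₁ : Matrix (Fin m) (Fin η) F := fun r c => if (r : ℕ) < i then A r c else 0
      let A₂ : Matrix (Fin m) (Fin η) F := A - A₁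
      have hAsum : A = A₁ + A₂ := by simp only [A₂]; abel
      -- rank of A₁
      have h1 : A₁.rank ≤ i := by
        have := row_support_rank A₁ (Finset.univ.filter fun r : Fin m => (r : ℕ) < i)
          (by
            intro r hr c
            simp only [Finset.mem_filter, Finset.mem_univ, true_and, not_lt] at hr
            simp only [A₁, if_neg (not_lt.mpr hr)])
        refine this.trans ?_
        have : (Finset.univ.filter fun r : Fin m => (r : ℕ) < i).card ≤
            (Finset.range i).card := by
          refine Finset.card_le_card_of_injOn (fun r => (r : ℕ)) ?_ ?_
          · intro r hr
            simp only [Finset.mem_coe, Finset.mem_filter, Finset.mem_univ, true_and] at hr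
            simpa using hr
          · exact Function.Injective.injOn Fin.val_injective
        simpa using this
      -- rank of A₂
      have h2 : A₂.rank ≤ k := by
        have := col_support_rank A₂ (Finset.univ.filter fun c : Fin η => t ≤ (c : ℕ))
          (by
            intro c hc r
            simp only [Finset.mem_filter, Finset.mem_univ, true_and, not_le] at hc
            -- c < t ; show A₂ r c = 0
            by_cases hr : (r : ℕ) < i
            · show A r c - A₁ r c = 0
              simp only [A₁, if_pos hr, sub_self]
            · have hA1 : A₁ r c = 0 := by simp only [A₁, if_neg hr]
              have hAe : A r c = 0 := by
                by_cases hFd : (r, c) ∈ Fd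
                · exact hx0 ⟨(r, c), Finset.mem_filter.mpr ⟨hFd, not_lt.mp hr, hc⟩⟩
                · exact hsupp A x.2 (r, c) hFd
              simp only [A₂, Matrix.sub_apply, hAe, hA1, sub_zero])
        refine this.trans ?_
        have : (Finset.univ.filter fun c : Fin η => t ≤ (c : ℕ)).card ≤
            (Finset.range k).card := by
          refine Finset.card_le_card_of_injOn (fun c => (c : ℕ) - t) ?_ ?_
          · intro c hc
            simp only [Finset.mem_coe, Finset.mem_filter, Finset.mem_univ, true_and] at hc
            have := c.isLt
            simp only [Finset.mem_coe, Finset.mem_range]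
            omega
          · intro a ha b hb hab
            simp only [Finset.mem_coe, Finset.mem_filter, Finset.mem_univ, true_and] at ha hb
            simp only at hab
            exact Fin.ext (by omega)
        simpa using this
      have hrank : A.rank ≤ δ - 1 := by
        have h3 : A.rank ≤ A₁.rank + A₂.rank := by
          conv_lhs => rw [hAsum]
          exact matrix_rank_add_le A₁ A₂
        omega
      rcases Nat.eq_zero_or_pos δ with hδ | hδ
      · -- δ = 0 : then i = 0, k = 0, t = η, so A vanishes everywhere
        have hi0 : i = 0 := by omega
        have ht' : t = η := by simp [ht, hk, hδ, hi0]
        apply hne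
        funext r c
        by_cases hFd : (r, c) ∈ Fd
        · exact hx0 ⟨(r, c), Finset.mem_filter.mpr ⟨hFd, by omega, by rw [ht']; exact c.isLt⟩⟩
        · exact hsupp A x.2 (r, c) hFd
      · have h0 : (0 : Matrix (Fin m) (Fin η) F) ∈ C := C.zero_mem
        have := hdist A x.2 0 h0 (by simpa using hne)
        rw [sub_zero] at this
        omega
    exact (Submodule.mem_bot F).mpr (Subtype.ext hxz)
  have hle := LinearMap.finrank_le_finrank_of_injective hinj
  rw [hdim] at hle
  calc ϱ ≤ Module.finrank F (↥S → F) := hle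
    _ = Fintype.card ↥S := Module.finrank_fintype_fun_eq_card F
    _ = S.card := Fintype.card_coe S
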